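/- Let $f_1,\ldots,f_n:(a,b)\to(0,\infty)$ be continuous positive functions and fix $i\in\{1,\ldots,n\}$ and $c\in(a,b)$. If $\int_c^b f_i^{-2}\left(\sum_{j=1}^n f_j^{-2}+1\right)^{-1/2}=\infty$, then for all constants $c_1,\ldots,c_n\geq 0$ with $c_1+\cdots+c_n=1$ and all $D\in\mathbb{R}$ such that $\sum_{j=1}^n c_j f_j(\tau)^{-2}-D>0$ for all $\tau\in(c,b)$, one has $\int_c^b f_i^{-2}\left(\sum_{j=1}^n c_j f_j^{-2}-D\right)^{-1/2}=\infty$. -/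
import Mathlib


open MeasureTheory Set

theorem stmt_3 (n : ℕ) (a b : ℝ) (f : Fin n → ℝ → ℝ)
    (hcont : ∀ j, ContinuousOn (f j) (Ioo a b))
    (hpos : ∀ j, ∀ τ ∈ Ioo a b, 0 < f j τ)
    (i : Fin n) (c : ℝ) (hc : c ∈ Ioo a b)
    (hdiv : ∫⁻ τ in Ioo c b,
      ENNReal.ofReal ((f i τ ^ 2)⁻¹ *
        (Real.sqrt ((∑ j, (f j τ ^ 2)⁻¹) + 1))⁻¹) = ⊤) :
    ∀ cs : Fin n → ℝ, (∀ j, 0 ≤ cs j) → (∑ j, cs j = 1) →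
      ∀ D : ℝ, (∀ τ ∈ Ioo c b, D < ∑ j, cs j * (f j τ ^ 2)⁻¹) →
      ∫⁻ τ in Ioo c b,
        ENNReal.ofReal ((f i τ ^ 2)⁻¹ *
          (Real.sqrt ((∑ j, cs j * (f j τ ^ 2)⁻¹) - D))⁻¹) = ⊤ := by
  intro cs hcs hsum D hD
  have hsub : Ioo c b ⊆ Ioo a b := fun τ hτ => ⟨lt_trans hc.1 hτ.1, hτ.2⟩
  set K : ℝ := (Real.sqrt (1 + |D|))⁻¹ with hK
  have hKpos : 0 < K := inv_pos.2 (Real.sqrt_pos.2 (by positivity))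
  have key : ∀ τ ∈ Ioo c b,
      ENNReal.ofReal K *
        ENNReal.ofReal ((f i τ ^ 2)⁻¹ * (Real.sqrt ((∑ j, (f j τ ^ 2)⁻¹) + 1))⁻¹)
      ≤ ENNReal.ofReal ((f i τ ^ 2)⁻¹ *
          (Real.sqrt ((∑ j, cs j * (f j τ ^ 2)⁻¹) - D))⁻¹) := by
    intro τ hτ
    rw [← ENNReal.ofReal_mul hKpos.le]
    apply ENNReal.ofReal_le_ofReal
    have hfpos : ∀ j, 0 < f j τ := fun j => hpos j τ (hsub hτ)
    have hx : ∀ j, 0 < (f j τ ^ 2)⁻¹ := fun j => by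
      have := hfpos j; positivity
    have hS : 0 ≤ ∑ j, (f j τ ^ 2)⁻¹ := Finset.sum_nonneg fun j _ => (hx j).le
    have hScD : 0 < (∑ j, cs j * (f j τ ^ 2)⁻¹) - D := sub_pos.2 (hD τ hτ)
    have hle : (∑ j, cs j * (f j τ ^ 2)⁻¹) - D ≤ (1 + |D|) * ((∑ j, (f j τ ^ 2)⁻¹) + 1) := by
      have h1 : (∑ j, cs j * (f j τ ^ 2)⁻¹) ≤ ∑ j, (f j τ ^ 2)⁻¹ := by
        apply Finset.sum_le_sum
        intro j _
        have hle1 : cs j ≤ 1 :=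
          hsum ▸ Finset.single_le_sum (fun k _ => hcs k) (Finset.mem_univ j)
        nlinarith [(hx j).le]
      have h2 : -D ≤ |D| := neg_le_abs D
      nlinarith [abs_nonneg D]
    have hsq : Real.sqrt ((∑ j, cs j * (f j τ ^ 2)⁻¹) - D)
        ≤ Real.sqrt (1 + |D|) * Real.sqrt ((∑ j, (f j τ ^ 2)⁻¹) + 1) := by
      rw [← Real.sqrt_mul (by positivity)]
      exact Real.sqrt_le_sqrt hle
    have hsqpos : 0 < Real.sqrt ((∑ j, cs j * (f j τ ^ 2)⁻¹) - D) := Real.sqrt_pos.2 hScD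
    calc K * ((f i τ ^ 2)⁻¹ * (Real.sqrt ((∑ j, (f j τ ^ 2)⁻¹) + 1))⁻¹)
        = (f i τ ^ 2)⁻¹ * (Real.sqrt (1 + |D|) * Real.sqrt ((∑ j, (f j τ ^ 2)⁻¹) + 1))⁻¹ := by
          rw [mul_inv, hK]; ring
      _ ≤ (f i τ ^ 2)⁻¹ * (Real.sqrt ((∑ j, cs j * (f j τ ^ 2)⁻¹) - D))⁻¹ :=
          mul_le_mul_of_nonneg_left (inv_anti₀ hsqpos hsq) (hx i).le
  have hle2 : ENNReal.ofReal K * ∫⁻ τ in Ioo c b,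
      ENNReal.ofReal ((f i τ ^ 2)⁻¹ * (Real.sqrt ((∑ j, (f j τ ^ 2)⁻¹) + 1))⁻¹)
      ≤ ∫⁻ τ in Ioo c b,
        ENNReal.ofReal ((f i τ ^ 2)⁻¹ *
          (Real.sqrt ((∑ j, cs j * (f j τ ^ 2)⁻¹) - D))⁻¹) := by
    rw [← lintegral_const_mul' _ _ ENNReal.ofReal_ne_top]
    exact setLIntegral_mono' measurableSet_Ioo key
  rw [hdiv, ENNReal.mul_top (ENNReal.ofReal_pos.2 hKpos).ne'] at hle2
  exact top_le_iff.mp hle2
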